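/- Let R be convex in the set-valued sense: for all X, Y in L^∞_d and all t ∈ [0,1], t·R(X) + (1−t)·R(Y) ⊆ R(tX + (1−t)Y) + K^n (Minkowski operations). Then the scalarization ρ_l is convex: for all X, Y in L^∞_d and all t ∈ [0,1], one has t·ρ_l(X) + (1−t)·ρ_l(Y) − ρ_l(tX + (1−t)Y) ∈ K^n. -/

import Mathlib

open MeasureTheory Pointwise

/-- If the set-valued risk measure `R` is convex (in the set-valued
sense), then its scalarization `ρ_l` along the ray `l` through a strictly positive
vector `v` is convex: `t • ρ_l X + (1-t) • ρ_l Y - ρ_l (t • X + (1-t) • Y) ∈ K^n`. -/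
theorem setValuedRiskMeasure_scalarization_convex
    {Ω : Type*} [MeasurableSpace Ω] (P : Measure Ω) [IsProbabilityMeasure P]
    {d n : ℕ}
    (Kd : Set (Fin d → ℝ)) (Kn : Set (Fin n → ℝ))
    (hKd_closed : IsClosed Kd) (hKd_convex : Convex ℝ Kd)
    (hKd_cone : ∀ x ∈ Kd, ∀ t : ℝ, 0 ≤ t → t • x ∈ Kd)
    (hKd_orth : ∀ x : Fin d → ℝ, (∀ i, 0 ≤ x i) → x ∈ Kd)
    (hKn_closed : IsClosed Kn) (hKn_convex : Convex ℝ Kn)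
    (hKn_cone : ∀ y ∈ Kn, ∀ t : ℝ, 0 ≤ t → t • y ∈ Kn)
    (hKn_orth : ∀ y : Fin n → ℝ, (∀ j, 0 ≤ y j) → y ∈ Kn)
    (v : Fin n → ℝ) (hv : ∀ j, 0 < v j)
    (l : Set (Fin n → ℝ)) (hl : l = {y | ∃ t : ℝ, 0 ≤ t ∧ y = t • v})
    (R : Lp (Fin d → ℝ) ⊤ P → Set (Fin n → ℝ))
    (hR_closed : ∀ Z, IsClosed (R Z))
    (hR_add : ∀ Z, R Z + Kn = R Z)
    (hR_ray : ∀ Z, (R Z ∩ l).Nonempty)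
    (ρ : Lp (Fin d → ℝ) ⊤ P → (Fin n → ℝ))
    (hρ : ∀ Z j, ρ Z j = sInf ((fun y => y j) '' (R Z ∩ l)))
    -- convexity of `R` in the set-valued sense
    (hconv : ∀ X Y : Lp (Fin d → ℝ) ⊤ P, ∀ t ∈ Set.Icc (0:ℝ) 1,
      t • R X + (1 - t) • R Y ⊆ R (t • X + (1 - t) • Y) + Kn) :
    ∀ X Y : Lp (Fin d → ℝ) ⊤ P, ∀ t ∈ Set.Icc (0:ℝ) 1,
      t • ρ X + (1 - t) • ρ Y - ρ (t • X + (1 - t) • Y) ∈ Kn := by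
  -- Key: for each Z, ρ Z = s₀ • v where s₀ is the minimal scaling with s₀ • v ∈ R Z
  have key : ∀ Z, ∃ s0 : ℝ, 0 ≤ s0 ∧ ρ Z = s0 • v ∧ s0 • v ∈ R Z ∧
      ∀ s : ℝ, 0 ≤ s → s • v ∈ R Z → s0 ≤ s := by
    intro Z
    set S : Set ℝ := {s : ℝ | 0 ≤ s ∧ s • v ∈ R Z} with hS
    have hSne : S.Nonempty := by
      obtain ⟨y, hyR, hyl⟩ := hR_ray Z
      rw [hl] at hyl
      obtain ⟨s, hs0, rfl⟩ := hyl
      exact ⟨s, hs0, hyR⟩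
    have hSclosed : IsClosed S := by
      have : S = Set.Ici (0:ℝ) ∩ (fun s : ℝ => s • v) ⁻¹' (R Z) := by
        ext s; simp [hS, Set.mem_Ici]
      rw [this]
      exact isClosed_Ici.inter ((hR_closed Z).preimage (continuous_id.smul continuous_const))
    have hSbdd : BddBelow S := ⟨0, fun s hs => hs.1⟩
    set s0 := sInf S with hs0def
    have hs0mem : s0 ∈ S := hSclosed.csInf_mem hSne hSbdd
    refine ⟨s0, hs0mem.1, ?_, hs0mem.2, fun s hs hsv => csInf_le hSbdd ⟨hs, hsv⟩⟩
    funext j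
    rw [hρ]
    have himg : (fun y => y j) '' (R Z ∩ l) = (fun s : ℝ => v j * s) '' S := by
      ext a
      constructor
      · rintro ⟨y, ⟨hyR, hyl⟩, rfl⟩
        rw [hl] at hyl
        obtain ⟨s, hsnn, rfl⟩ := hyl
        exact ⟨s, ⟨hsnn, hyR⟩, by simp [mul_comm]⟩
      · rintro ⟨s, ⟨hsnn, hsR⟩, rfl⟩
        exact ⟨s • v, ⟨hsR, by rw [hl]; exact ⟨s, hsnn, rfl⟩⟩, by simp [mul_comm]⟩
    have hmono : Monotone (fun s : ℝ => v j * s) := fun a b hab =>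
      mul_le_mul_of_nonneg_left hab (hv j).le
    have hcont : ContinuousOn (fun s : ℝ => v j * s) S :=
      (continuous_const.mul continuous_id).continuousOn
    have heq := Monotone.map_csInf_of_continuousAt
      ((continuous_mul_left (v j)).continuousAt) hmono hSne hSbdd
    rw [himg, ← heq]
    simp [Pi.smul_apply, smul_eq_mul, mul_comm]
    exact Or.inl hs0def.symm
  intro X Y t ht
  obtain ⟨ht0, ht1⟩ := ht
  obtain ⟨sX, hsX0, hρX, hsXR, _⟩ := key X
  obtain ⟨sY, hsY0, hρY, hsYR, _⟩ := key Y
  obtain ⟨sW, hsW0, hρW, hsWR, hsWmin⟩ := key (t • X + (1 - t) • Y)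
  set s : ℝ := t * sX + (1 - t) * sY with hsdef
  have hs0 : 0 ≤ s := add_nonneg (mul_nonneg ht0 hsX0)
    (mul_nonneg (by linarith) hsY0)
  have hcomb : t • ρ X + (1 - t) • ρ Y = s • v := by
    rw [hρX, hρY, smul_smul, smul_smul, hsdef, add_smul]
  have hmem : s • v ∈ R (t • X + (1 - t) • Y) + Kn := by
    apply hconv X Y t ⟨ht0, ht1⟩
    rw [← hcomb, hρX, hρY]
    exact Set.add_mem_add (Set.smul_mem_smul_set hsXR) (Set.smul_mem_smul_set hsYR)
  rw [hR_add] at hmem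
  have hle : sW ≤ s := hsWmin s hs0 hmem
  rw [hcomb, hρW]
  have : s • v - sW • v = (s - sW) • v := by rw [sub_smul]
  rw [this]
  exact hKn_orth _ fun j => mul_nonneg (by linarith) (hv j).le
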